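/- The N×N matrix D̃_{2:N+1}, consisting of columns 2 through N+1 of the augmented differentiation matrix D̃ = [D D_p] (that is, the columns L_2'(τ_i),…,L_N'(τ_i) of D together with the column D_p), is nonsingular. -/
import Mathlib


open Polynomial

/-- `lagL τ i` is the `i`-th Lagrange basis polynomial (of degree `N - 1`)
for the nodes `τ 0, …, τ (N-1)`, satisfying `(lagL τ i).eval (τ j) = δᵢⱼ`. -/
noncomputable def lagL {N : ℕ} (τ : Fin N → ℝ) (i : Fin N) : ℝ[X] :=
  Lagrange.basis Finset.univ τ i

/-- `lagLp τ` is the polynomial `L_p(x) = ∏ᵢ (x - τᵢ)`. -/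
noncomputable def lagLp {N : ℕ} (τ : Fin N → ℝ) : ℝ[X] :=
  ∏ i, (X - C (τ i))

/-- The differentiation matrix `D`, with `D i j = L_j'(τ i)`. -/
noncomputable def matD {N : ℕ} (τ : Fin N → ℝ) : Matrix (Fin N) (Fin N) ℝ :=
  fun i j => (derivative (lagL τ j)).eval (τ i)

/-- The vector `D_p`, with `(D_p) i = L_p'(τ i)`. -/
noncomputable def vecDp {N : ℕ} (τ : Fin N → ℝ) : Fin N → ℝ :=
  fun i => (derivative (lagLp τ)).eval (τ i)

/-- Columns `2, …, N+1` (in 1-based numbering) of the augmented differentiation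
matrix `D̃ = [D  D_p]`: column `j` (0-based, `j < N - 1`) is column `j + 1` of `D`,
and the last column is `D_p`. -/
noncomputable def matDtil2 {N : ℕ} (τ : Fin N → ℝ) : Matrix (Fin N) (Fin N) ℝ :=
  fun i j => if h : (j : ℕ) + 1 < N then matD τ i ⟨(j : ℕ) + 1, h⟩ else vecDp τ i

/-- The quadrature rule with nodes `τ` and weights `w` integrates exactly all
polynomials of degree at most `2 * N - 3` over `[-1, 1]`. -/
def IsQuadrature {N : ℕ} (τ : Fin N → ℝ) (w : Fin N → ℝ) : Prop :=
  ∀ p : ℝ[X], p.natDegree ≤ 2 * N - 3 →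
    ∑ i, w i * p.eval (τ i) = ∫ t in (-1 : ℝ)..1, p.eval t

/-- The integration matrix `A` with rows indexed (0-based) by `i : Fin (N-1)`
corresponding to the node `τ (i+1)`: `A i j = ∫_{-1}^{τ (i+1)} L_j(t) dt`. -/
noncomputable def matA {N : ℕ} (τ : Fin N → ℝ) : Matrix (Fin (N - 1)) (Fin N) ℝ :=
  fun i j => ∫ t in (-1 : ℝ)..(τ ⟨(i : ℕ) + 1, by have := i.isLt; omega⟩), (lagL τ j).eval t

/-- The row vector `A_p`, with `(A_p) j = (1/N) ∏_{k ≠ j} 1 / (τ j - τ k)`. -/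
noncomputable def rowAp {N : ℕ} (τ : Fin N → ℝ) : Fin N → ℝ :=
  fun j => (1 / (N : ℝ)) * ∏ k ∈ Finset.univ.erase j, (τ j - τ k)⁻¹

/-- The matrix `Ã` obtained by stacking `A` on top of the row vector `A_p`. -/
noncomputable def matAtil {N : ℕ} (τ : Fin N → ℝ) : Matrix (Fin N) (Fin N) ℝ :=
  fun i j => if h : (i : ℕ) + 1 < N then matA τ ⟨(i : ℕ), by omega⟩ j else rowAp τ j

/-- The adjoint integration matrix `A† = W⁻¹ Aᵀ W_{2:N}`, with columns indexed
(0-based) by `j : Fin (N-1)` corresponding to the node `τ (j+1)`. -/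
noncomputable def matAdag {N : ℕ} (τ : Fin N → ℝ) (w : Fin N → ℝ) :
    Matrix (Fin N) (Fin (N - 1)) ℝ :=
  fun i j => (w i)⁻¹ * matA τ j i * w ⟨(j : ℕ) + 1, by have := j.isLt; omega⟩

/-- `polyM τ k` is the Lagrange basis polynomial (of degree `N - 3`) for the
interior nodes `τ 1, …, τ (N-2)`, satisfying `(polyM τ k).eval (τ m) = δₖₘ`
for interior indices `m`. -/
noncomputable def polyM {N : ℕ} (τ : Fin N → ℝ) (k : Fin N) : ℝ[X] :=
  Lagrange.basis (Finset.univ.filter fun m : Fin N => 0 < (m : ℕ) ∧ (m : ℕ) < N - 1) τ k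

/-- The polynomial `λ(x) = ∑ᵢ (A† r)ᵢ Lᵢ(x)`. -/
noncomputable def lamP {N : ℕ} (τ : Fin N → ℝ) (w : Fin N → ℝ) (r : Fin (N - 1) → ℝ) : ℝ[X] :=
  ∑ i, C ((matAdag τ w).mulVec r i) * lagL τ i

/-- The matrix `D̃_{2:N+1}` is nonsingular. -/
theorem stmt0 (N : ℕ) (hN : 3 ≤ N) (τ : Fin N → ℝ) (hmono : StrictMono τ)
    (h0 : τ ⟨0, by omega⟩ = -1) (h1 : τ ⟨N - 1, by omega⟩ = 1) :
    (matDtil2 τ).det ≠ 0 := by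
  classical
  intro hdet
  obtain ⟨v, hv, hveq⟩ := Matrix.exists_mulVec_eq_zero_iff.2 hdet
  apply hv
  have hinj : Function.Injective τ := hmono.injective
  have hinjOn : Set.InjOn τ (Finset.univ : Finset (Fin N)) := hinj.injOn
  set P : Fin N → ℝ[X] := fun j =>
    if h : (j : ℕ) + 1 < N then lagL τ ⟨(j : ℕ) + 1, h⟩ else lagLp τ with hP
  set q : ℝ[X] := ∑ j, C (v j) * P j with hq
  have hLdeg : ∀ k : Fin N, (lagL τ k).natDegree = N - 1 := fun k => by
    simpa [lagL] using Lagrange.natDegree_basis hinjOn (Finset.mem_univ k)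
  have hLpmonic : (lagLp τ).Monic := monic_prod_of_monic _ _ fun i _ => monic_X_sub_C _
  have hLpdeg : (lagLp τ).natDegree = N := by
    rw [lagLp, natDegree_prod]
    · simp
    · intro i _; exact X_sub_C_ne_zero _
  have hPdeg : ∀ j, (P j).natDegree ≤ N := by
    intro j; rw [hP]; dsimp only; split
    · rw [hLdeg]; omega
    · rw [hLpdeg]
  have hqdeg : q.natDegree ≤ N := by
    apply Polynomial.natDegree_sum_le_of_forall_le
    intro j _
    exact le_trans (natDegree_C_mul_le _ _) (hPdeg j)
  have hent : ∀ i j : Fin N, matDtil2 τ i j = (derivative (P j)).eval (τ i) := by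
    intro i j
    by_cases hj : (j : ℕ) + 1 < N <;> simp [matDtil2, matD, vecDp, hP, hj]
  have hLp0 : ∀ m : Fin N, (lagLp τ).eval (τ m) = 0 := fun m => by
    rw [lagLp, eval_prod]
    exact Finset.prod_eq_zero (Finset.mem_univ m) (by simp)
  have hdq : derivative q = 0 := by
    apply Polynomial.eq_zero_of_natDegree_lt_card_of_eval_eq_zero _ hinj
    · intro i
      have h := congrFun hveq i
      simp only [Matrix.mulVec, dotProduct, Pi.zero_apply] at h
      rw [hq, derivative_sum, eval_finset_sum, ← h]
      apply Finset.sum_congr rfl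
      intro j _
      rw [derivative_C_mul, eval_mul, eval_C, hent, mul_comm]
    · calc q.derivative.natDegree ≤ q.natDegree - 1 := natDegree_derivative_le q
        _ < N := by omega
        _ = Fintype.card (Fin N) := by simp
  have hq0 : q.eval (τ ⟨0, by omega⟩) = 0 := by
    rw [hq, eval_finset_sum]
    apply Finset.sum_eq_zero
    intro j _
    rw [eval_mul, hP]
    dsimp only; split
    · rw [lagL, Lagrange.eval_basis_of_ne (by simp [Fin.ext_iff]) (Finset.mem_univ _), mul_zero]
    · rw [hLp0, mul_zero]
  have hqz : q = 0 := by
    have h1 := Polynomial.eq_C_of_natDegree_eq_zero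
      (Polynomial.natDegree_eq_zero_of_derivative_eq_zero hdq)
    rw [h1] at hq0 ⊢
    simp only [eval_C] at hq0
    rw [hq0, map_zero]
  funext j
  show v j = 0
  by_cases hj : (j : ℕ) + 1 < N
  · have he : q.eval (τ ⟨(j : ℕ) + 1, hj⟩) = v j := by
      rw [hq, eval_finset_sum, Finset.sum_eq_single_of_mem j (Finset.mem_univ j)]
      · rw [eval_mul, eval_C, hP]
        dsimp only
        rw [dif_pos hj, lagL, Lagrange.eval_basis_self hinjOn (Finset.mem_univ _), mul_one]
      · intro k _ hkj
        rw [eval_mul, hP]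
        dsimp only; split
        · next hk =>
          have hne : (⟨(k : ℕ) + 1, hk⟩ : Fin N) ≠ ⟨(j : ℕ) + 1, hj⟩ := by
            simp only [ne_eq, Fin.mk.injEq, add_left_inj]
            exact fun h => hkj (Fin.ext h)
          rw [lagL, Lagrange.eval_basis_of_ne hne (Finset.mem_univ _), mul_zero]
        · rw [hLp0, mul_zero]
    rw [hqz, eval_zero] at he
    exact he.symm
  · have hc : q.coeff N = v j := by
      rw [hq, finset_sum_coeff, Finset.sum_eq_single_of_mem j (Finset.mem_univ j)]
      · rw [coeff_C_mul, hP]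
        dsimp only
        rw [dif_neg hj]
        have : (lagLp τ).coeff N = 1 := by
          have := hLpmonic.coeff_natDegree
          rwa [hLpdeg] at this
        rw [this, mul_one]
      · intro k _ hkj
        rw [coeff_C_mul, hP]
        dsimp only; split
        · next hk =>
          rw [coeff_eq_zero_of_natDegree_lt, mul_zero]
          rw [hLdeg]; omega
        · next hk =>
          exact absurd (Fin.ext (by omega : (k : ℕ) = (j : ℕ))) hkj
    rw [hqz, coeff_zero] at hc
    exact hc.symm
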